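/- Let p be prime, g ∈ ℤ_p[x], and a ∈ ℤ_p with g(a) ≠ 0. Let λ = v_p(g(a)) and μ = v_p(g'(a)) (p-adic valuations). If λ > 2μ, then {g(a+ξ) : ξ ∈ p^{λ−μ}ℤ_p} = p^λ ℤ_p. -/

import Mathlib

noncomputable section

namespace BQPaper8

lemma dvd_iff_norm_le {p : ℕ} [Fact p.Prime] (n : ℕ) (x : ℤ_[p]) :
    (p : ℤ_[p]) ^ n ∣ x ↔ ‖x‖ ≤ (p : ℝ) ^ (-(n : ℤ)) := by
  rw [show (-(n:ℤ)) = (-n : ℤ) from rfl, PadicInt.norm_le_pow_iff_mem_span_pow,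
    Ideal.mem_span_singleton]

/-- a version of Hensel's lemma.  Let `p` be prime, `g ∈ ℤ_p[x]`,
and `a ∈ ℤ_p` with `g(a) ≠ 0`.  If `λ = v_p(g(a))` and `μ = v_p(g'(a))` (expressed via
exact divisibility) satisfy `λ > 2μ`, then `{g(a+ξ) : ξ ∈ p^(λ−μ)ℤ_p} = p^λ ℤ_p`. -/
theorem hensel_image (p : ℕ) [Fact p.Prime] (g : Polynomial ℤ_[p]) (a : ℤ_[p])
    (hga : g.eval a ≠ 0) (lam mu : ℕ)
    (hlam : (p : ℤ_[p]) ^ lam ∣ g.eval a) (hlam' : ¬ (p : ℤ_[p]) ^ (lam + 1) ∣ g.eval a)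
    (hmu : (p : ℤ_[p]) ^ mu ∣ (Polynomial.derivative g).eval a)
    (hmu' : ¬ (p : ℤ_[p]) ^ (mu + 1) ∣ (Polynomial.derivative g).eval a)
    (hgt : 2 * mu < lam) :
    (fun ξ : ℤ_[p] => g.eval (a + ξ)) '' {ξ : ℤ_[p] | (p : ℤ_[p]) ^ (lam - mu) ∣ ξ}
      = {x : ℤ_[p] | (p : ℤ_[p]) ^ lam ∣ x} := by
  have hprime : Prime (p : ℤ_[p]) := PadicInt.prime_p
  obtain ⟨w, hw⟩ := hmu
  have hpw : ¬ (p : ℤ_[p]) ∣ w := by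
    rintro ⟨c, hc⟩
    exact hmu' ⟨c, by rw [hw, hc, pow_succ]; ring⟩
  ext x
  simp only [Set.mem_image, Set.mem_setOf_eq]
  constructor
  · rintro ⟨ξ, hξ, rfl⟩
    obtain ⟨k, hk⟩ := g.binomExpansion a ξ
    rw [hk]
    refine dvd_add (dvd_add hlam ?_) ?_
    · rw [hw, mul_assoc]
      have h1 : (p : ℤ_[p]) ^ lam ∣ (p : ℤ_[p]) ^ mu * (p : ℤ_[p]) ^ (lam - mu) := by
        rw [← pow_add]
        exact pow_dvd_pow _ (by omega)
      exact h1.trans (mul_dvd_mul_left _ (hξ.mul_left w))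
    · have h2 : (p : ℤ_[p]) ^ ((lam - mu) * 2) ∣ ξ ^ 2 := by
        rw [pow_mul]; exact pow_dvd_pow_of_dvd hξ 2
      exact (((pow_dvd_pow (p : ℤ_[p]) (show lam ≤ (lam - mu) * 2 by omega)).trans h2)).mul_left k
  · intro hx
    -- Apply Hensel's lemma to F = g - C x at a.
    set F : Polynomial ℤ_[p] := g - Polynomial.C x with hF
    have hFe : ∀ t, F.eval t = g.eval t - x := by intro t; simp [hF]
    have hFd : F.derivative = g.derivative := by simp [hF]
    have hwu : ‖w‖ = 1 := by
      have := (PadicInt.norm_lt_one_iff_dvd w).not.mpr hpw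
      have h1 := PadicInt.norm_le_one w
      push_neg at this
      linarith
    have hdn : ‖F.derivative.eval a‖ = (p : ℝ) ^ (-(mu : ℤ)) := by
      rw [hFd, hw, norm_mul, hwu, mul_one, PadicInt.norm_p_pow]
    have hnorm : ‖F.eval a‖ < ‖F.derivative.eval a‖ ^ 2 := by
      have hFa : ‖F.eval a‖ ≤ (p : ℝ) ^ (-(lam : ℤ)) := by
        rw [← dvd_iff_norm_le, hFe]
        exact dvd_sub hlam hx
      have hplt : (1 : ℝ) < p := by exact_mod_cast (Fact.out : p.Prime).one_lt
      have : ((p : ℝ) ^ (-(mu : ℤ))) ^ 2 = (p : ℝ) ^ (-(2 * mu : ℕ) : ℤ) := by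
        rw [← zpow_natCast _ 2, ← zpow_mul]
        congr 1; push_cast; ring
      rw [hdn, this]
      refine lt_of_le_of_lt hFa ?_
      exact zpow_lt_zpow_right₀ hplt (by omega)
    obtain ⟨z, hz, hzd, -, -⟩ := hensels_lemma hnorm
    have hgz : g.eval z = x := by
      have := hFe z; rw [show F.eval z = 0 by simpa using hz] at this; exact sub_eq_zero.mp this.symm
    set ξ := z - a with hξdef
    have hgaξ : g.eval (a + ξ) = x := by
      rw [hξdef, add_sub_cancel, hgz]
    -- base case: p^(mu+1) ∣ ξ
    have base : (p : ℤ_[p]) ^ (mu + 1) ∣ ξ := by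
      rw [dvd_iff_norm_le]
      have : ‖ξ‖ < (p : ℝ) ^ (-(mu : ℤ)) := by rw [← hdn]; exact hzd
      rw [PadicInt.norm_lt_pow_iff_norm_le_pow_sub_one] at this
      convert this using 2
      push_cast; ring
    have key : ∀ n, n ≤ lam - mu → (p : ℤ_[p]) ^ n ∣ ξ := by
      intro n
      induction n with
      | zero => intro _; simp
      | succ n ih =>
        intro hn
        by_cases hc : n + 1 ≤ mu + 1
        · exact (pow_dvd_pow _ hc).trans base
        · have hdξ : (p : ℤ_[p]) ^ n ∣ ξ := ih (by omega)
          obtain ⟨k, hk⟩ := g.binomExpansion a ξ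
          have h0 : g.derivative.eval a * ξ = x - g.eval a - k * ξ ^ 2 := by
            rw [← hgaξ, hk]; ring
          have hd1 : (p : ℤ_[p]) ^ (mu + (n + 1)) ∣ x - g.eval a - k * ξ ^ 2 := by
            refine dvd_sub (dvd_sub ?_ ?_) ?_
            · exact (pow_dvd_pow _ (by omega)).trans hx
            · exact (pow_dvd_pow _ (by omega)).trans hlam
            · have h2 : (p : ℤ_[p]) ^ (n * 2) ∣ ξ ^ 2 := by
                rw [pow_mul]; exact pow_dvd_pow_of_dvd hdξ 2
              exact ((pow_dvd_pow _ (show mu + (n+1) ≤ n * 2 by omega)).trans h2).mul_left k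
          rw [← h0, hw, mul_assoc, pow_add] at hd1
          have hd2 : (p : ℤ_[p]) ^ (n + 1) ∣ w * ξ :=
            (mul_dvd_mul_iff_left (pow_ne_zero mu hprime.ne_zero)).mp hd1
          exact hprime.pow_dvd_of_dvd_mul_left (n + 1) hpw hd2
    exact ⟨ξ, key (lam - mu) le_rfl, hgaξ⟩

end BQPaper8
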